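/- Let X = TRM(𝒜^{1:D}) ∈ ℝ^{I×K} and Y = TRM(ℬ^{1:D}) ∈ ℝ^{J×K} be two tensor-ring matrices with shared column tensorization K = ∏_d K_d, where 𝒜ᵈ ∈ ℝ^{I_d×K_d×R×R} and ℬᵈ ∈ ℝ^{J_d×K_d×S×S}. Then the product X Yᵀ is itself a tensor-ring matrix TRM(𝒞^{1:D}) of ranks RS, with core tensors given by 𝒞ᵈ[i_d, j_d, :, :] = Σ_{l=1}^{K_d} 𝒜ᵈ[i_d, l, :, :] ⊗ ℬᵈ[j_d, l, :, :]. -/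

import Mathlib

open Kronecker

lemma kron_list_prod {m n : Type*} [Fintype m] [Fintype n] [DecidableEq m] [DecidableEq n]
    {ι : Type*} (f : ι → Matrix m m ℝ) (g : ι → Matrix n n ℝ) :
    ∀ l : List ι, (l.map f).prod ⊗ₖ (l.map g).prod = (l.map fun d => f d ⊗ₖ g d).prod
  | [] => by simp [Matrix.one_kronecker_one]
  | a :: l => by
    simp only [List.map_cons, List.prod_cons, Matrix.mul_kronecker_mul,
      kron_list_prod f g l]

lemma aux_prod_sum {R : Type*} [NonAssocSemiring R] :
    ∀ {D : ℕ} (K : Fin D → ℕ) (M : ∀ d : Fin D, Fin (K d) → R),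
    ((List.finRange D).map fun d => ∑ l, M d l).prod
      = ∑ k : ∀ d, Fin (K d), ((List.finRange D).map fun d => M d (k d)).prod
  | 0, K, M => by simp
  | (D+1), K, M => by
    rw [List.finRange_succ]
    simp only [List.map_cons, List.map_map, List.prod_cons, Function.comp_def]
    rw [aux_prod_sum (fun d => K d.succ) (fun d => M d.succ), Finset.sum_mul_sum]
    rw [← Equiv.sum_comp (Fin.consEquiv (fun d => Fin (K d)))]
    rw [Fintype.sum_prod_type]
    refine Finset.sum_congr rfl fun l _ => Finset.sum_congr rfl fun kt _ => ?_
    simp [Fin.consEquiv]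

/-- The tensor-ring matrix (TRM) with core tensors `A d : Fin (I d) → Fin (J d) → Matrix ρ ρ ℝ`. -/
def TRM {D : ℕ} {I J : Fin D → ℕ} {ρ : Type*} [Fintype ρ] [DecidableEq ρ]
    (A : ∀ d, Fin (I d) → Fin (J d) → Matrix ρ ρ ℝ) :
    Matrix (∀ d, Fin (I d)) (∀ d, Fin (J d)) ℝ :=
  Matrix.of fun i j => (((List.finRange D).map fun d => A d (i d) (j d)).prod).trace

/-- The product `X Yᵀ` of two tensor-ring matrices `X = TRM(𝒜)` (ranks `R`) and `Y = TRM(ℬ)`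
(ranks `S`) with shared column tensorization is a tensor-ring matrix of ranks `R·S` with cores
`𝒞ᵈ[i,j,:,:] = Σ_l 𝒜ᵈ[i,l,:,:] ⊗ ℬᵈ[j,l,:,:]`. -/
theorem stmt_4 (D R S : ℕ) (I J K : Fin D → ℕ)
    (A : ∀ d, Fin (I d) → Fin (K d) → Matrix (Fin R) (Fin R) ℝ)
    (B : ∀ d, Fin (J d) → Fin (K d) → Matrix (Fin S) (Fin S) ℝ) :
    TRM A * (TRM B).transpose
      = TRM (fun d (i : Fin (I d)) (j : Fin (J d)) =>
          ∑ l : Fin (K d), (A d i l) ⊗ₖ (B d j l)) := by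
  ext i j
  rw [Matrix.mul_apply]
  simp only [Matrix.transpose_apply, TRM, Matrix.of_apply]
  rw [aux_prod_sum (fun d => K d) (fun d l => A d (i d) l ⊗ₖ B d (j d) l),
    Matrix.trace_sum]
  refine Finset.sum_congr rfl fun k _ => ?_
  rw [← kron_list_prod, Matrix.trace_kronecker]
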